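/- Let K be a nondegenerate triangle in ℝ² with area |K|, let q : ℝ² → ℝ² be a C¹ vector field, and let p(x) = a x + b be a Raviart–Thomas field in RT₀ whose flux across each edge of K equals that of q (with the same orientation). Then the constant divergence of p is the mean value of the divergence of q over K: 2a = (1/|K|) ∫_K div q dx, where div q = ∂q₁/∂x + ∂q₂/∂y. -/

import Mathlib

open MeasureTheory

noncomputable section

abbrev E2 : Type := EuclideanSpace ℝ (Fin 2)

/-- The point (a, b) in the Euclidean plane. -/
def pt (a b : ℝ) : E2 := WithLp.toLp 2 ![a, b]

/-- First standard basis vector. -/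
def vex : E2 := pt 1 0
/-- Second standard basis vector. -/
def vey : E2 := pt 0 1

/-- Euclidean dot product on the plane. -/
def dot2 (v w : E2) : ℝ := v 0 * w 0 + v 1 * w 1

/-- rot (w₁, w₂) = (w₂, −w₁). -/
def rot (w : E2) : E2 := pt (w 1) (-(w 0))

/-- Flux of a vector field across the (oriented) segment from `a` to `b`:
∫₀¹ q(a + t(b − a)) · rot(b − a) dt, the line integral of the normal component. -/
def flux (q : E2 → E2) (a b : E2) : ℝ :=
  ∫ t in (0:ℝ)..1, dot2 (q (a + t • (b - a))) (rot (b - a))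

/-- Squared Euclidean norm of the gradient of a scalar function. -/
def gradSq (v : E2 → ℝ) (x : E2) : ℝ :=
  (fderiv ℝ v x vex) ^ 2 + (fderiv ℝ v x vey) ^ 2

/-- Gradient vector of a scalar function. -/
def gradVec (v : E2 → ℝ) (x : E2) : E2 :=
  pt (fderiv ℝ v x vex) (fderiv ℝ v x vey)

/-- Squared Frobenius norm of the Jacobian of a vector field
(sum of squares of the four first-order partial derivatives). -/
def frobSq (q : E2 → E2) (x : E2) : ℝ :=
  (fderiv ℝ q x vex 0) ^ 2 + (fderiv ℝ q x vey 0) ^ 2 +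
  (fderiv ℝ q x vex 1) ^ 2 + (fderiv ℝ q x vey 1) ^ 2

/-- Divergence of a planar vector field. -/
def divg (q : E2 → E2) (x : E2) : ℝ := fderiv ℝ q x vex 0 + fderiv ℝ q x vey 1

/-- The reference triangle with vertices (0,0), (1,0), (0,1). -/
def Khat : Set E2 := convexHull ℝ {pt 0 0, pt 1 0, pt 0 1}

/-- The triangle with vertices (0,0), (α,0), (0,β). -/
def Kab (a b : ℝ) : Set E2 := convexHull ℝ {pt 0 0, pt a 0, pt 0 b}

/-- Matrix–vector multiplication for 2×2 matrices acting on the plane. -/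
def matVec (A : Matrix (Fin 2) (Fin 2) ℝ) (x : E2) : E2 :=
  pt (A 0 0 * x 0 + A 0 1 * x 1) (A 1 0 * x 0 + A 1 1 * x 1)

/-- Squared Frobenius norm of a 2×2 matrix. -/
def mFrobSq (M : Matrix (Fin 2) (Fin 2) ℝ) : ℝ :=
  M 0 0 ^ 2 + M 0 1 ^ 2 + M 1 0 ^ 2 + M 1 1 ^ 2


section Aux
open Set

def Tset : Set (ℝ × ℝ) := {z | 0 ≤ z.1 ∧ 0 ≤ z.2 ∧ z.1 + z.2 ≤ 1}

lemma Tset_meas : MeasurableSet Tset := by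
  have h1 : MeasurableSet {z : ℝ × ℝ | 0 ≤ z.1} := measurableSet_le measurable_const measurable_fst
  have h2 : MeasurableSet {z : ℝ × ℝ | 0 ≤ z.2} := measurableSet_le measurable_const measurable_snd
  have h3 : MeasurableSet {z : ℝ × ℝ | z.1 + z.2 ≤ 1} :=
    measurableSet_le (measurable_fst.add measurable_snd) measurable_const
  exact (h1.inter (h2.inter h3))

lemma Tset_compact : IsCompact Tset := by
  have : Tset ⊆ Icc ((0:ℝ), (0:ℝ)) (1, 1) := by
    rintro ⟨x, y⟩ ⟨h1, h2, h3⟩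
    constructor <;> constructor <;> simp_all <;> linarith
  refine IsCompact.of_isClosed_subset isCompact_Icc ?_ this
  have h1 : IsClosed {z : ℝ × ℝ | 0 ≤ z.1} := isClosed_le continuous_const continuous_fst
  have h2 : IsClosed {z : ℝ × ℝ | 0 ≤ z.2} := isClosed_le continuous_const continuous_snd
  have h3 : IsClosed {z : ℝ × ℝ | z.1 + z.2 ≤ 1} :=
    isClosed_le (continuous_fst.add continuous_snd) continuous_const
  exact h1.inter (h2.inter h3)

lemma greenA (f : ℝ × ℝ → ℝ) (hf : ContDiff ℝ 1 f) :
    ∫ z in Tset, fderiv ℝ f z (1, 0) =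
      ∫ y in (0:ℝ)..1, (f (1 - y, y) - f (0, y)) := by
  set F : ℝ × ℝ → ℝ := fun z => fderiv ℝ f z (1, 0) with hF
  have hFc : Continuous F := by
    have := (hf.continuous_fderiv one_ne_zero)
    exact this.clm_apply continuous_const
  have hInt : IntegrableOn F Tset volume := hFc.locallyIntegrable.integrableOn_isCompact Tset_compact
  have hIndInt : Integrable (Tset.indicator F) volume :=
    (integrable_indicator_iff Tset_meas).2 hInt
  rw [← integral_indicator Tset_meas]
  rw [Measure.volume_eq_prod] at hIndInt ⊢
  rw [integral_prod_symm _ hIndInt]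
  have key : ∀ y : ℝ, (∫ x : ℝ, Tset.indicator F (x, y)) =
      (Icc (0:ℝ) 1).indicator (fun y => f (1 - y, y) - f (0, y)) y := by
    intro y
    by_cases hy : y ∈ Icc (0:ℝ) 1
    · rw [indicator_of_mem hy]
      obtain ⟨hy0, hy1⟩ := hy
      have hslice : (fun x => Tset.indicator F (x, y)) =
          (Icc (0:ℝ) (1 - y)).indicator (fun x => F (x, y)) := by
        funext x
        by_cases hx : x ∈ Icc (0:ℝ) (1 - y)
        · rw [indicator_of_mem hx]
          exact indicator_of_mem (show (x,y) ∈ Tset from ⟨hx.1, hy0, by have := hx.2; simp only []; linarith⟩) F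
        · rw [indicator_of_notMem hx, indicator_of_notMem]
          rintro ⟨h1, _, h3⟩
          exact hx ⟨h1, by linarith⟩
      rw [hslice, integral_indicator measurableSet_Icc,
        integral_Icc_eq_integral_Ioc,
        ← intervalIntegral.integral_of_le (by linarith : (0:ℝ) ≤ 1 - y)]
      have := intervalIntegral.integral_eq_sub_of_hasDerivAt
        (f := fun x => f (x, y)) (f' := fun x => F (x, y))
        (a := 0) (b := 1 - y) ?_ ?_
      · rw [this]
      · intro x _
        have h1 : HasDerivAt (fun x : ℝ => (x, y)) ((1:ℝ), (0:ℝ)) x :=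
          (hasDerivAt_id x).prodMk (hasDerivAt_const x y)
        exact ((hf.differentiable one_ne_zero (x, y)).hasFDerivAt).comp_hasDerivAt x h1
      · exact ((hFc.comp (continuous_id.prodMk continuous_const)).intervalIntegrable _ _)
    · rw [indicator_of_notMem hy]
      have : (fun x => Tset.indicator F (x, y)) = fun _ => (0:ℝ) := by
        funext x
        apply indicator_of_notMem
        rintro ⟨_, h2, h3⟩
        simp only [mem_Icc, not_and_or, not_le] at hy
        rcases hy with h | h
        · linarith
        · linarith [h3, ‹0 ≤ x›]
      rw [this, integral_zero]
  simp_rw [key]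
  rw [integral_indicator measurableSet_Icc, integral_Icc_eq_integral_Ioc,
    ← intervalIntegral.integral_of_le (by norm_num : (0:ℝ) ≤ 1)]



lemma swap_preimage_Tset : Prod.swap ⁻¹' Tset = Tset := by
  ext ⟨x, y⟩
  simp only [Tset, mem_preimage, Prod.swap_prod_mk, mem_setOf_eq]
  constructor <;> rintro ⟨h1, h2, h3⟩ <;> exact ⟨h2, h1, by linarith⟩

lemma greenB (f : ℝ × ℝ → ℝ) (hf : ContDiff ℝ 1 f) :
    ∫ z in Tset, fderiv ℝ f z (0, 1) =
      ∫ x in (0:ℝ)..1, (f (x, 1 - x) - f (x, 0)) := by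
  set g : ℝ × ℝ → ℝ := fun z => f z.swap with hg
  have hgc : ContDiff ℝ 1 g := hf.comp (contDiff_snd.prodMk contDiff_fst)
  have hA := greenA g hgc
  have hderiv : ∀ z : ℝ × ℝ, fderiv ℝ g z (1, 0) = fderiv ℝ f z.swap (0, 1) := by
    intro z
    have hs : HasFDerivAt (Prod.swap : ℝ × ℝ → ℝ × ℝ)
        ((ContinuousLinearEquiv.prodComm ℝ ℝ ℝ : (ℝ × ℝ) →L[ℝ] (ℝ × ℝ))) z :=
      (ContinuousLinearEquiv.prodComm ℝ ℝ ℝ).toContinuousLinearMap.hasFDerivAt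
    have hcomp : HasFDerivAt g
        ((fderiv ℝ f z.swap).comp
          ((ContinuousLinearEquiv.prodComm ℝ ℝ ℝ : (ℝ × ℝ) →L[ℝ] (ℝ × ℝ)))) z :=
      ((hf.differentiable one_ne_zero z.swap).hasFDerivAt).comp z hs
    rw [hcomp.fderiv]
    rfl
  have hswapInt : ∫ z in Tset, fderiv ℝ f z.swap (0, 1) =
      ∫ z in Tset, fderiv ℝ f z (0, 1) := by
    have hmp : MeasurePreserving (Prod.swap : ℝ × ℝ → ℝ × ℝ) volume volume := by
      rw [Measure.volume_eq_prod]
      exact Measure.measurePreserving_swap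
    have := hmp.setIntegral_preimage_emb
      (MeasurableEquiv.prodComm.measurableEmbedding)
      (fun z => fderiv ℝ f z (0, 1)) Tset
    rw [← this, swap_preimage_Tset]
  simp_rw [hderiv] at hA
  rw [hswapInt] at hA
  rw [hA]
  simp only [hg, Prod.swap_prod_mk]



@[simp] lemma pt0 (a b : ℝ) : pt a b 0 = a := rfl
@[simp] lemma pt1 (a b : ℝ) : pt a b 1 = b := rfl

/-- The reference triangle as an explicit set. -/
def Sref : Set E2 := {x | 0 ≤ x 0 ∧ 0 ≤ x 1 ∧ x 0 + x 1 ≤ 1}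

/-- ℝ×ℝ → E2 as a continuous linear map. -/
def TL : ℝ × ℝ →L[ℝ] E2 :=
  ((PiLp.continuousLinearEquiv 2 ℝ (fun _ : Fin 2 => ℝ)).symm.toContinuousLinearMap).comp
    (ContinuousLinearMap.pi ![ContinuousLinearMap.fst ℝ ℝ ℝ, ContinuousLinearMap.snd ℝ ℝ ℝ])

lemma TL_apply (z : ℝ × ℝ) : TL z = pt z.1 z.2 := by
  ext i
  fin_cases i <;> rfl

def psiE : E2 ≃ᵐ ℝ × ℝ :=
  (MeasurableEquiv.toLp 2 (Fin 2 → ℝ)).symm.trans MeasurableEquiv.finTwoArrow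

lemma psiE_apply (x : E2) : psiE x = (x 0, x 1) := rfl

lemma psiE_mp : MeasurePreserving psiE volume volume :=
  (volume_preserving_finTwoArrow ℝ).comp (EuclideanSpace.volume_preserving_symm_measurableEquiv_toLp (Fin 2))

lemma TL_psiE (x : E2) : TL (psiE x) = x := by
  rw [psiE_apply, TL_apply]
  ext i
  fin_cases i <;> rfl

end Aux

section GreenE2
open Set

@[simp] lemma pt_add (a b c d : ℝ) : pt a b + pt c d = pt (a + c) (b + d) := by
  ext i; fin_cases i <;> simp [PiLp.add_apply]

@[simp] lemma pt_sub (a b c d : ℝ) : pt a b - pt c d = pt (a - c) (b - d) := by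
  ext i; fin_cases i <;> simp [PiLp.sub_apply]

@[simp] lemma pt_smul (t a b : ℝ) : t • pt a b = pt (t * a) (t * b) := by
  ext i; fin_cases i <;> simp [PiLp.smul_apply]

lemma rot_pt (a b : ℝ) : rot (pt a b) = pt b (-a) := by simp [rot]

lemma greenE2 (r : E2 → E2) (hr : ContDiff ℝ 1 r) :
    ∫ x in Sref, divg r x =
      flux r (pt 0 0) (pt 1 0) + flux r (pt 1 0) (pt 0 1) + flux r (pt 0 1) (pt 0 0) := by
  classical
  set f : ℝ × ℝ → ℝ := fun z => r (TL z) 0 with hfdef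
  set g : ℝ × ℝ → ℝ := fun z => r (TL z) 1 with hgdef
  have hfc : ContDiff ℝ 1 f := by
    have h : ContDiff ℝ 1 ((EuclideanSpace.proj (0 : Fin 2) : E2 →L[ℝ] ℝ) ∘ r ∘ TL) :=
      (EuclideanSpace.proj (0 : Fin 2)).contDiff.comp (hr.comp TL.contDiff)
    exact h
  have hgc : ContDiff ℝ 1 g := by
    have h : ContDiff ℝ 1 ((EuclideanSpace.proj (1 : Fin 2) : E2 →L[ℝ] ℝ) ∘ r ∘ TL) :=
      (EuclideanSpace.proj (1 : Fin 2)).contDiff.comp (hr.comp TL.contDiff)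
    exact h
  have hdf : ∀ z : ℝ × ℝ, fderiv ℝ f z (1, 0) = fderiv ℝ r (TL z) vex 0 := by
    intro z
    have h1 : HasFDerivAt r (fderiv ℝ r (TL z)) (TL z) :=
      (hr.differentiable one_ne_zero _).hasFDerivAt
    have h2 : HasFDerivAt f (((EuclideanSpace.proj (0 : Fin 2)).comp
        (fderiv ℝ r (TL z))).comp TL) z := by
      have h : HasFDerivAt (((EuclideanSpace.proj (0 : Fin 2) : E2 →L[ℝ] ℝ) ∘ r) ∘ TL)
          (((EuclideanSpace.proj (0 : Fin 2)).comp (fderiv ℝ r (TL z))).comp TL) z :=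
        (((EuclideanSpace.proj (0 : Fin 2)).hasFDerivAt.comp _ h1).comp z TL.hasFDerivAt)
      exact h
    have hTL1 : TL ((1:ℝ), (0:ℝ)) = vex := by rw [TL_apply]; rfl
    rw [h2.fderiv, ContinuousLinearMap.comp_apply, ContinuousLinearMap.comp_apply, hTL1]
    rfl
  have hdg : ∀ z : ℝ × ℝ, fderiv ℝ g z (0, 1) = fderiv ℝ r (TL z) vey 1 := by
    intro z
    have h1 : HasFDerivAt r (fderiv ℝ r (TL z)) (TL z) :=
      (hr.differentiable one_ne_zero _).hasFDerivAt
    have h2 : HasFDerivAt g (((EuclideanSpace.proj (1 : Fin 2)).comp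
        (fderiv ℝ r (TL z))).comp TL) z := by
      have h : HasFDerivAt (((EuclideanSpace.proj (1 : Fin 2) : E2 →L[ℝ] ℝ) ∘ r) ∘ TL)
          (((EuclideanSpace.proj (1 : Fin 2)).comp (fderiv ℝ r (TL z))).comp TL) z :=
        (((EuclideanSpace.proj (1 : Fin 2)).hasFDerivAt.comp _ h1).comp z TL.hasFDerivAt)
      exact h
    have hTL1 : TL ((0:ℝ), (1:ℝ)) = vey := by rw [TL_apply]; rfl
    rw [h2.fderiv, ContinuousLinearMap.comp_apply, ContinuousLinearMap.comp_apply, hTL1]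
    rfl
  have hpre : psiE ⁻¹' Tset = Sref := rfl
  have htrans : ∫ x in Sref, divg r x = ∫ z in Tset, divg r (TL z) := by
    have := psiE_mp.setIntegral_preimage_emb psiE.measurableEmbedding
      (fun z => divg r (TL z)) Tset
    rw [hpre] at this
    simp only [TL_psiE] at this
    exact this
  have hdiv : ∀ z : ℝ × ℝ, divg r (TL z) = fderiv ℝ f z (1, 0) + fderiv ℝ g z (0, 1) := by
    intro z; rw [hdf, hdg]; rfl
  -- split the integral
  have hFc : Continuous fun z : ℝ × ℝ => fderiv ℝ f z (1, 0) :=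
    (hfc.continuous_fderiv one_ne_zero).clm_apply continuous_const
  have hGc : Continuous fun z : ℝ × ℝ => fderiv ℝ g z (0, 1) :=
    (hgc.continuous_fderiv one_ne_zero).clm_apply continuous_const
  have hsplit : ∫ z in Tset, divg r (TL z)
      = (∫ z in Tset, fderiv ℝ f z (1, 0)) + ∫ z in Tset, fderiv ℝ g z (0, 1) := by
    simp_rw [hdiv]
    exact integral_add (hFc.locallyIntegrable.integrableOn_isCompact Tset_compact)
      (hGc.locallyIntegrable.integrableOn_isCompact Tset_compact)
  -- the four elementary integrals
  set I1 : ℝ := ∫ t in (0:ℝ)..1, f (1 - t, t) with hI1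
  set I2 : ℝ := ∫ t in (0:ℝ)..1, f (0, t) with hI2
  set I3 : ℝ := ∫ t in (0:ℝ)..1, g (1 - t, t) with hI3
  set I4 : ℝ := ∫ t in (0:ℝ)..1, g (t, 0) with hI4
  have hc1 : Continuous fun t : ℝ => f (1 - t, t) :=
    hfc.continuous.comp ((continuous_const.sub continuous_id).prodMk continuous_id)
  have hc2 : Continuous fun t : ℝ => f (0, t) :=
    hfc.continuous.comp (continuous_const.prodMk continuous_id)
  have hc3 : Continuous fun t : ℝ => g (1 - t, t) :=
    hgc.continuous.comp ((continuous_const.sub continuous_id).prodMk continuous_id)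
  have hc4 : Continuous fun t : ℝ => g (t, 0) :=
    hgc.continuous.comp (continuous_id.prodMk continuous_const)
  have hA : ∫ z in Tset, fderiv ℝ f z (1, 0) = I1 - I2 := by
    rw [greenA f hfc, intervalIntegral.integral_sub (hc1.intervalIntegrable _ _)
      (hc2.intervalIntegrable _ _)]
  have hc5 : Continuous fun t : ℝ => g (t, 1 - t) :=
    hgc.continuous.comp (continuous_id.prodMk (continuous_const.sub continuous_id))
  have hB : ∫ z in Tset, fderiv ℝ g z (0, 1) = I3 - I4 := by
    rw [greenB g hgc, intervalIntegral.integral_sub (hc5.intervalIntegrable _ _)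
      (hc4.intervalIntegrable _ _)]
    congr 1
    have h := intervalIntegral.integral_comp_sub_left (a := (0:ℝ)) (b := 1)
      (fun s => g (1 - s, s)) 1
    simp only [sub_zero, sub_self, sub_sub_cancel] at h
    rw [hI3, ← h]
  -- fluxes
  have hflux1 : flux r (pt 0 0) (pt 1 0) = -I4 := by
    rw [flux, hI4, ← intervalIntegral.integral_neg]
    apply intervalIntegral.integral_congr
    intro t ht
    have hpt : pt 0 0 + t • (pt 1 0 - pt 0 0) = TL (t, 0) := by
      ext i; fin_cases i <;>
        simp [TL_apply, PiLp.add_apply, PiLp.smul_apply, PiLp.sub_apply, smul_eq_mul]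
    show dot2 (r (pt 0 0 + t • (pt 1 0 - pt 0 0))) (rot (pt 1 0 - pt 0 0)) = -g (t, 0)
    rw [hpt]
    simp [dot2, rot, hgdef]
  have hflux2 : flux r (pt 1 0) (pt 0 1) = I1 + I3 := by
    rw [flux, hI1, hI3, ← intervalIntegral.integral_add (hc1.intervalIntegrable _ _)
      (hc3.intervalIntegrable _ _)]
    apply intervalIntegral.integral_congr
    intro t ht
    have hpt : pt 1 0 + t • (pt 0 1 - pt 1 0) = TL (1 - t, t) := by
      ext i; fin_cases i <;>
        simp [TL_apply, PiLp.add_apply, PiLp.smul_apply, PiLp.sub_apply, smul_eq_mul] <;> ring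
    show dot2 (r (pt 1 0 + t • (pt 0 1 - pt 1 0))) (rot (pt 0 1 - pt 1 0)) = f (1 - t, t) + g (1 - t, t)
    rw [hpt]
    simp [dot2, rot, hfdef, hgdef]
  have hflux3 : flux r (pt 0 1) (pt 0 0) = -I2 := by
    have hsub : (∫ t in (0:ℝ)..1, f (0, 1 - t)) = I2 := by
      have := intervalIntegral.integral_comp_sub_left (a := (0:ℝ)) (b := 1)
        (fun s => f (0, s)) 1
      simp only [sub_zero, sub_self] at this
      rw [hI2, this]
    rw [flux, ← hsub, ← intervalIntegral.integral_neg]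
    apply intervalIntegral.integral_congr
    intro t ht
    have hpt : pt 0 1 + t • (pt 0 0 - pt 0 1) = TL (0, 1 - t) := by
      ext i; fin_cases i <;>
        simp [TL_apply, PiLp.add_apply, PiLp.smul_apply, PiLp.sub_apply, smul_eq_mul] <;> ring
    show dot2 (r (pt 0 1 + t • (pt 0 0 - pt 0 1))) (rot (pt 0 0 - pt 0 1)) = -f (0, 1 - t)
    rw [hpt]
    simp [dot2, rot, hfdef]
  rw [htrans, hsplit, hA, hB, hflux1, hflux2, hflux3]
  ring

end GreenE2

section Hull
open Set

lemma coord_continuous (i : Fin 2) : Continuous fun x : E2 => x i :=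
  (EuclideanSpace.proj i).continuous

lemma convex_Sref : Convex ℝ Sref := by
  intro x hx y hy s t hs ht hst
  obtain ⟨hx0, hx1, hx2⟩ := hx
  obtain ⟨hy0, hy1, hy2⟩ := hy
  have h0 : (s • x + t • y) 0 = s * x 0 + t * y 0 := by
    simp [PiLp.add_apply, PiLp.smul_apply, smul_eq_mul]
  have h1 : (s • x + t • y) 1 = s * x 1 + t * y 1 := by
    simp [PiLp.add_apply, PiLp.smul_apply, smul_eq_mul]
  refine ⟨?_, ?_, ?_⟩
  · rw [h0]; positivity
  · rw [h1]; positivity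
  · rw [h0, h1]; nlinarith

lemma Khat_eq_Sref : Khat = Sref := by
  apply le_antisymm
  · apply convexHull_min _ convex_Sref
    rintro x (rfl | rfl | rfl) <;> exact ⟨by norm_num, by norm_num, by norm_num⟩
  · intro x hx
    obtain ⟨hx0, hx1, hx2⟩ := hx
    have hv0 : pt 0 0 ∈ Khat := subset_convexHull ℝ _ (by simp)
    have hv1 : pt 1 0 ∈ Khat := subset_convexHull ℝ _ (by simp)
    have hv2 : pt 0 1 ∈ Khat := subset_convexHull ℝ _ (by simp)
    have hconv : Convex ℝ Khat := convex_convexHull ℝ _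
    rcases eq_or_lt_of_le (by positivity : (0:ℝ) ≤ x 0 + x 1) with hs | hs
    · have h0 : x 0 = 0 := by linarith
      have h1 : x 1 = 0 := by linarith
      have : x = pt 0 0 := by
        ext i; fin_cases i <;> simp [h0, h1]
      rw [this]; exact hv0
    · set s : ℝ := x 0 + x 1 with hsdef
      have hm : (x 0 / s) • pt 1 0 + (x 1 / s) • pt 0 1 ∈ Khat :=
        hconv hv1 hv2 (by positivity) (by positivity) (by field_simp; exact hsdef.symm)
      have hx' : x = (1 - s) • pt 0 0 + s • ((x 0 / s) • pt 1 0 + (x 1 / s) • pt 0 1) := by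
        ext i
        fin_cases i <;>
          simp [PiLp.add_apply, PiLp.smul_apply, smul_eq_mul] <;> field_simp
      rw [hx']
      exact hconv hv0 hm (by linarith) (by linarith) (by ring)

end Hull

section LinAlg
open Set

/-- The linear map with columns `u`, `v`. -/
def ML (u v : E2) : E2 →L[ℝ] E2 :=
  ((EuclideanSpace.proj (0 : Fin 2)).smulRight u) + ((EuclideanSpace.proj (1 : Fin 2)).smulRight v)

lemma ML_apply (u v x : E2) : ML u v x = x 0 • u + x 1 • v := by
  simp [ML]

lemma ML_coord (u v x : E2) (i : Fin 2) : ML u v x i = x 0 * u i + x 1 * v i := by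
  rw [ML_apply]
  simp [PiLp.add_apply, PiLp.smul_apply, smul_eq_mul]

lemma vex_coord0 : vex 0 = 1 := rfl
lemma vex_coord1 : vex 1 = 0 := rfl
lemma vey_coord0 : vey 0 = 0 := rfl
lemma vey_coord1 : vey 1 = 1 := rfl

lemma clm_coord (A : E2 →L[ℝ] E2) (w : E2) (i : Fin 2) :
    A w i = w 0 * A vex i + w 1 * A vey i := by
  have hw : w = w 0 • vex + w 1 • vey := by
    ext j; fin_cases j <;>
      simp [vex, vey, PiLp.add_apply, PiLp.smul_apply, smul_eq_mul]
  conv_lhs => rw [hw]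
  rw [map_add, A.map_smul, A.map_smul]
  simp [PiLp.add_apply, PiLp.smul_apply, smul_eq_mul]

lemma ML_det (u v : E2) : (ML u v).det = u 0 * v 1 - u 1 * v 0 := by
  have hb := PiLp.basisFun 2 ℝ (Fin 2)
  rw [ContinuousLinearMap.det, ← LinearMap.det_toMatrix (PiLp.basisFun 2 ℝ (Fin 2)),
    Matrix.det_fin_two]
  have hentry : ∀ i j : Fin 2,
      LinearMap.toMatrix (PiLp.basisFun 2 ℝ (Fin 2)) (PiLp.basisFun 2 ℝ (Fin 2))
        (ML u v : E2 →ₗ[ℝ] E2) i j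
      = ML u v (PiLp.basisFun 2 ℝ (Fin 2) j) i := by
    intro i j
    rw [LinearMap.toMatrix_apply]
    simp [PiLp.basisFun_repr]
  rw [hentry, hentry, hentry, hentry]
  have hb0 : (PiLp.basisFun 2 ℝ (Fin 2)) 0 = vex := by
    ext i; fin_cases i <;> simp [PiLp.basisFun_apply, vex, EuclideanSpace.single_apply]
  have hb1 : (PiLp.basisFun 2 ℝ (Fin 2)) 1 = vey := by
    ext i; fin_cases i <;> simp [PiLp.basisFun_apply, vey, EuclideanSpace.single_apply]
  rw [hb0, hb1]
  simp only [ML_coord, vex_coord0, vex_coord1, vey_coord0, vey_coord1]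
  ring

lemma det_ne_zero_of_affineIndependent (x₁ x₂ x₃ : E2)
    (hK : AffineIndependent ℝ ![x₁, x₂, x₃]) :
    (x₂ - x₁) 0 * (x₃ - x₁) 1 - (x₂ - x₁) 1 * (x₃ - x₁) 0 ≠ 0 := by
  set u : E2 := x₂ - x₁ with hu
  set v : E2 := x₃ - x₁ with hv
  intro hD
  have hdep : ∀ w : Fin 3 → ℝ, (∑ i, w i = 0) →
      (∑ i, w i • (![x₁, x₂, x₃] i)) = 0 → ∀ i, w i = 0 := by
    intro w hw hcomb i
    have h1 := hK Finset.univ w hw ?_ i (Finset.mem_univ i)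
    · exact h1
    · rw [Finset.weightedVSub_eq_linear_combination _ hw]
      simpa using hcomb
  -- from hD, get linear dependence
  have hcases : (u 0 = 0 ∧ u 1 = 0) ∨ (∃ c : ℝ, v 0 = c * u 0 ∧ v 1 = c * u 1) := by
    by_cases h0 : u 0 = 0
    · by_cases h1 : u 1 = 0
      · exact Or.inl ⟨h0, h1⟩
      · refine Or.inr ⟨v 1 / u 1, ?_, ?_⟩
        · rw [h0, mul_zero]
          rw [h0] at hD
          have hz : u 1 * v 0 = 0 := by linarith
          rcases mul_eq_zero.1 hz with h | h
          · exact absurd h h1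
          · exact h
        · field_simp
    · refine Or.inr ⟨v 0 / u 0, ?_, ?_⟩
      · field_simp
      · field_simp
        linear_combination hD
  have hucoord : ∀ i : Fin 2, u i = x₂ i - x₁ i := by
    intro i; rw [hu]; simp [PiLp.sub_apply]
  have hvcoord : ∀ i : Fin 2, v i = x₃ i - x₁ i := by
    intro i; rw [hv]; simp [PiLp.sub_apply]
  rcases hcases with ⟨h0, h1⟩ | ⟨c, hc0, hc1⟩
  · have := hdep ![-1, 1, 0] (by simp [Fin.sum_univ_three]) ?_ 1
    · simpa using this
    · rw [Fin.sum_univ_three]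
      ext i
      fin_cases i <;>
        · simp [PiLp.add_apply, PiLp.smul_apply, smul_eq_mul, PiLp.zero_apply]
          have h := hucoord
          first
          | (have := h0; rw [hucoord 0] at this; linarith)
          | (have := h1; rw [hucoord 1] at this; linarith)
  · have := hdep ![c - 1, -c, 1] (by simp [Fin.sum_univ_three]; ring) ?_ 2
    · simpa using this
    · rw [Fin.sum_univ_three]
      ext i
      fin_cases i <;>
        · simp [PiLp.add_apply, PiLp.smul_apply, smul_eq_mul, PiLp.zero_apply]
          first
          | (have h := hc0; rw [hucoord 0, hvcoord 0] at h; linarith)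
          | (have h := hc1; rw [hucoord 1, hvcoord 1] at h; linarith)

end LinAlg

section VolumePiola
open Set

lemma Sref_closed : IsClosed Sref := by
  have h1 : IsClosed {x : E2 | 0 ≤ x 0} := isClosed_le continuous_const (coord_continuous 0)
  have h2 : IsClosed {x : E2 | 0 ≤ x 1} := isClosed_le continuous_const (coord_continuous 1)
  have h3 : IsClosed {x : E2 | x 0 + x 1 ≤ 1} :=
    isClosed_le ((coord_continuous 0).add (coord_continuous 1)) continuous_const
  exact h1.inter (h2.inter h3)

lemma Sref_meas : MeasurableSet Sref := Sref_closed.measurableSet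

lemma divg_affine (c : ℝ) (b : E2) (x : E2) : divg (fun y : E2 => c • y + b) x = 2 * c := by
  have hfd : HasFDerivAt (fun y : E2 => c • y + b) (c • (ContinuousLinearMap.id ℝ E2)) x :=
    ((hasFDerivAt_id x).const_smul c).add_const b
  rw [divg, hfd.fderiv]
  simp only [ContinuousLinearMap.smul_apply, ContinuousLinearMap.id_apply,
    PiLp.smul_apply, smul_eq_mul, vex_coord0, vey_coord1]
  ring

lemma Sref_vol : (volume Sref).toReal = 1 / 2 := by
  set w : E2 → E2 := fun y => (1/2 : ℝ) • y + 0 with hw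
  have hwc : ContDiff ℝ 1 w := (contDiff_id.const_smul _).add contDiff_const
  have hgr := greenE2 w hwc
  have hdivw : ∀ x : E2, divg w x = 1 := by
    intro x; rw [hw, divg_affine]; norm_num
  have hlhs : ∫ x in Sref, divg w x = (volume Sref).toReal := by
    simp_rw [hdivw]
    rw [setIntegral_const]
    simp [measureReal_def]
  -- compute the three fluxes
  have hf1 : flux w (pt 0 0) (pt 1 0) = 0 := by
    rw [flux]
    have : ∀ t : ℝ, t ∈ uIcc (0:ℝ) 1 →
        dot2 (w (pt 0 0 + t • (pt 1 0 - pt 0 0))) (rot (pt 1 0 - pt 0 0)) = 0 := by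
      intro t _
      simp [hw, dot2, rot, PiLp.add_apply, PiLp.smul_apply, smul_eq_mul]
    rw [intervalIntegral.integral_congr this]
    simp
  have hf2 : flux w (pt 1 0) (pt 0 1) = 1 / 2 := by
    rw [flux]
    have : ∀ t : ℝ, t ∈ uIcc (0:ℝ) 1 →
        dot2 (w (pt 1 0 + t • (pt 0 1 - pt 1 0))) (rot (pt 0 1 - pt 1 0)) = 1/2 := by
      intro t _
      simp [hw, dot2, rot, PiLp.add_apply, PiLp.smul_apply, smul_eq_mul]
      ring
    rw [intervalIntegral.integral_congr this]
    simp
  have hf3 : flux w (pt 0 1) (pt 0 0) = 0 := by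
    rw [flux]
    have : ∀ t : ℝ, t ∈ uIcc (0:ℝ) 1 →
        dot2 (w (pt 0 1 + t • (pt 0 0 - pt 0 1))) (rot (pt 0 0 - pt 0 1)) = 0 := by
      intro t _
      simp [hw, dot2, rot, PiLp.add_apply, PiLp.smul_apply, smul_eq_mul]
    rw [intervalIntegral.integral_congr this]
    simp
  rw [hlhs, hf1, hf2, hf3] at hgr
  linarith

lemma dot2_rot_ML (u v z w : E2) :
    dot2 z (rot (ML u v w)) =
      dot2 (ML (pt (v 1) (-(u 1))) (pt (-(v 0)) (u 0)) z) (rot w) := by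
  simp only [dot2, rot, ML_coord, pt0, pt1]
  ring

/-- Piola transform: the transformed field has matching divergence integral and fluxes. -/
lemma piola (x₁ u v : E2) (q : E2 → E2) (hq : ContDiff ℝ 1 q) :
    (u 0 * v 1 - u 1 * v 0) * ∫ z in Sref, divg q (x₁ + ML u v z) =
      flux q (x₁ + ML u v (pt 0 0)) (x₁ + ML u v (pt 1 0)) +
      flux q (x₁ + ML u v (pt 1 0)) (x₁ + ML u v (pt 0 1)) +
      flux q (x₁ + ML u v (pt 0 1)) (x₁ + ML u v (pt 0 0)) := by
  classical
  set D : ℝ := u 0 * v 1 - u 1 * v 0 with hD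
  set M : E2 →L[ℝ] E2 := ML u v with hM
  set N : E2 →L[ℝ] E2 := ML (pt (v 1) (-(u 1))) (pt (-(v 0)) (u 0)) with hN
  set L : E2 → E2 := fun x => x₁ + M x with hLdef
  set r : E2 → E2 := fun z => N (q (L z)) with hr
  have hLc : ContDiff ℝ 1 L := contDiff_const.add M.contDiff
  have hrc : ContDiff ℝ 1 r := by
    have h : ContDiff ℝ 1 (⇑N ∘ q ∘ L) := N.contDiff.comp (hq.comp hLc)
    exact h
  have hMvex : M vex = u := by
    rw [hM, ML_apply, vex_coord0, vex_coord1]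
    simp
  have hMvey : M vey = v := by
    rw [hM, ML_apply, vey_coord0, vey_coord1]
    simp
  -- divergence identity
  have hdivr : ∀ z : E2, divg r z = D * divg q (L z) := by
    intro z
    have hAq : HasFDerivAt q (fderiv ℝ q (L z)) (L z) :=
      (hq.differentiable one_ne_zero _).hasFDerivAt
    have hLd : HasFDerivAt L M z := M.hasFDerivAt.const_add x₁
    have h2 : HasFDerivAt r ((N.comp (fderiv ℝ q (L z))).comp M) z := by
      have h : HasFDerivAt ((⇑N ∘ q) ∘ L) ((N.comp (fderiv ℝ q (L z))).comp M) z :=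
        (N.hasFDerivAt.comp _ hAq).comp z hLd
      exact h
    have hA : ∀ (ww : E2) (i : Fin 2), fderiv ℝ q (L z) ww i =
        ww 0 * fderiv ℝ q (L z) vex i + ww 1 * fderiv ℝ q (L z) vey i :=
      fun ww i => clm_coord _ ww i
    simp only [divg, h2.fderiv, ContinuousLinearMap.comp_apply, hMvex, hMvey]
    rw [hN]
    simp only [ML_coord, pt0, pt1]
    rw [hA u 0, hA u 1, hA v 0, hA v 1, hD]
    ring
  -- flux identity
  have hflux : ∀ c d : E2, flux q (L c) (L d) = flux r c d := by
    intro c d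
    rw [flux, flux]
    apply intervalIntegral.integral_congr
    intro t _
    have hsub : L d - L c = M (d - c) := by
      rw [hLdef]
      simp only [map_sub]
      abel
    have hpoint : L c + t • (L d - L c) = L (c + t • (d - c)) := by
      rw [hsub, hLdef]
      simp only [map_add, M.map_smul]
      abel
    show dot2 (q (L c + t • (L d - L c))) (rot (L d - L c)) = dot2 (r (c + t • (d - c))) (rot (d - c))
    rw [hpoint, hsub, hM, dot2_rot_ML]
  have hgr := greenE2 r hrc
  have hint : ∫ x in Sref, divg r x = D * ∫ z in Sref, divg q (L z) := by
    simp_rw [hdivr]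
    rw [integral_const_mul]
  rw [hint] at hgr
  rw [hgr, ← hflux, ← hflux, ← hflux]

end VolumePiola

/-- The divergence of the Raviart–Thomas interpolant is the mean of the divergence:
if `p(x) = a x + b` has the same edge fluxes as `q` on the triangle `K`, then
`2a = (1/|K|) ∫_K div q dx`. -/
theorem stmt5 (x₁ x₂ x₃ : E2) (hK : AffineIndependent ℝ ![x₁, x₂, x₃])
    (K : Set E2) (hKdef : K = convexHull ℝ {x₁, x₂, x₃})
    (q : E2 → E2) (hq : ContDiff ℝ 1 q)
    (a : ℝ) (b : E2) (p : E2 → E2) (hp : p = fun x => a • x + b)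
    (h₁ : flux p x₂ x₃ = flux q x₂ x₃)
    (h₂ : flux p x₃ x₁ = flux q x₃ x₁)
    (h₃ : flux p x₁ x₂ = flux q x₁ x₂) :
    2 * a = (1 / (volume K).toReal) * ∫ x in K, divg q x := by
  classical
  have hDne : (x₂ - x₁) 0 * (x₃ - x₁) 1 - (x₂ - x₁) 1 * (x₃ - x₁) 0 ≠ 0 :=
    det_ne_zero_of_affineIndependent x₁ x₂ x₃ hK
  -- abbreviations (no `set`, to keep syntactic control)
  have hpc : ContDiff ℝ 1 p := by
    rw [hp]; exact (contDiff_id.const_smul a).add contDiff_const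
  -- vertex values of the affine map
  have ep0 : x₁ + ML (x₂ - x₁) (x₃ - x₁) (pt 0 0) = x₁ := by
    rw [ML_apply]; simp
  have ep1 : x₁ + ML (x₂ - x₁) (x₃ - x₁) (pt 1 0) = x₂ := by
    rw [ML_apply]; simp
  have ep2 : x₁ + ML (x₂ - x₁) (x₃ - x₁) (pt 0 1) = x₃ := by
    rw [ML_apply]; simp
  -- the affine map sends Sref to K
  have hKL : K = (fun y => x₁ + ML (x₂ - x₁) (x₃ - x₁) y) '' Sref := by
    have hLA : ∃ LA : E2 →ᵃ[ℝ] E2, ⇑LA = fun y => x₁ + ML (x₂ - x₁) (x₃ - x₁) y := by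
      refine ⟨⟨fun y => x₁ + ML (x₂ - x₁) (x₃ - x₁) y,
        (ML (x₂ - x₁) (x₃ - x₁)).toLinearMap, ?_⟩, rfl⟩
      intro pp ww
      show x₁ + ML (x₂ - x₁) (x₃ - x₁) (ww + pp)
        = ML (x₂ - x₁) (x₃ - x₁) ww + (x₁ + ML (x₂ - x₁) (x₃ - x₁) pp)
      rw [map_add]; abel
    obtain ⟨LA, hLA⟩ := hLA
    have himg : (fun y => x₁ + ML (x₂ - x₁) (x₃ - x₁) y) '' ({pt 0 0, pt 1 0, pt 0 1} : Set E2)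
        = {x₁, x₂, x₃} := by
      rw [Set.image_insert_eq, Set.image_insert_eq, Set.image_singleton]
      rw [ep0, ep1, ep2]
    rw [hKdef, ← Khat_eq_Sref, Khat, ← hLA, AffineMap.image_convexHull, hLA, himg]
  -- injectivity on Sref
  have hinj : Set.InjOn (fun y => x₁ + ML (x₂ - x₁) (x₃ - x₁) y) Sref := by
    intro x hx y hy hxy
    have hMeq : ML (x₂ - x₁) (x₃ - x₁) x = ML (x₂ - x₁) (x₃ - x₁) y :=
      add_left_cancel hxy
    have e0 := congrArg (fun w : E2 => w 0) hMeq
    have e1 := congrArg (fun w : E2 => w 1) hMeq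
    simp only [ML_coord] at e0 e1
    have ha : (x 0 - y 0) * ((x₂ - x₁) 0 * (x₃ - x₁) 1 - (x₂ - x₁) 1 * (x₃ - x₁) 0) = 0 := by
      linear_combination (x₃ - x₁) 1 * e0 - (x₃ - x₁) 0 * e1
    have hb : (x 1 - y 1) * ((x₂ - x₁) 0 * (x₃ - x₁) 1 - (x₂ - x₁) 1 * (x₃ - x₁) 0) = 0 := by
      linear_combination (x₂ - x₁) 0 * e1 - (x₂ - x₁) 1 * e0
    have ha0 : x 0 - y 0 = 0 := by
      rcases mul_eq_zero.1 ha with h | h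
      · exact h
      · exact absurd h hDne
    have hb0 : x 1 - y 1 = 0 := by
      rcases mul_eq_zero.1 hb with h | h
      · exact h
      · exact absurd h hDne
    have hx0 : x 0 = y 0 := by linarith
    have hx1 : x 1 = y 1 := by linarith
    ext i
    fin_cases i
    · exact hx0
    · exact hx1
  -- change of variables
  have hfder : ∀ x ∈ Sref, HasFDerivWithinAt (fun y => x₁ + ML (x₂ - x₁) (x₃ - x₁) y)
      (ML (x₂ - x₁) (x₃ - x₁)) Sref x :=
    fun x _ => ((ML (x₂ - x₁) (x₃ - x₁)).hasFDerivAt.const_add x₁).hasFDerivWithinAt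
  have hdet : (ML (x₂ - x₁) (x₃ - x₁)).det
      = (x₂ - x₁) 0 * (x₃ - x₁) 1 - (x₂ - x₁) 1 * (x₃ - x₁) 0 := ML_det _ _
  have hcvq := integral_image_eq_integral_abs_det_fderiv_smul volume Sref_meas hfder hinj (divg q)
  have hcv1 := integral_image_eq_integral_abs_det_fderiv_smul volume Sref_meas hfder hinj
    (fun _ : E2 => (1 : ℝ))
  simp only [hdet, smul_eq_mul] at hcvq hcv1
  rw [integral_const_mul] at hcvq
  -- volume of K
  have habs : |(x₂ - x₁) 0 * (x₃ - x₁) 1 - (x₂ - x₁) 1 * (x₃ - x₁) 0| ≠ 0 := abs_ne_zero.2 hDne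
  have hvolK : (volume K).toReal
      = |(x₂ - x₁) 0 * (x₃ - x₁) 1 - (x₂ - x₁) 1 * (x₃ - x₁) 0| * (1 / 2) := by
    have h1 : ∫ _x in K, (1:ℝ) = (volume K).toReal := by
      rw [setIntegral_const]; simp [measureReal_def]
    have h2 : ∫ _x in Sref,
        (|(x₂ - x₁) 0 * (x₃ - x₁) 1 - (x₂ - x₁) 1 * (x₃ - x₁) 0| * (1:ℝ))
        = |(x₂ - x₁) 0 * (x₃ - x₁) 1 - (x₂ - x₁) 1 * (x₃ - x₁) 0| * (1/2) := by
      rw [setIntegral_const, measureReal_def, Sref_vol]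
      simp [smul_eq_mul]
      ring
    rw [← h1, hKL, hcv1, h2]
  -- Piola applied to q and p
  have hpio_q := piola x₁ (x₂ - x₁) (x₃ - x₁) q hq
  have hpio_p := piola x₁ (x₂ - x₁) (x₃ - x₁) p hpc
  rw [ep0, ep1, ep2] at hpio_q hpio_p
  -- the p-side integral
  have hdivp : ∀ x : E2, divg p x = 2 * a := by
    intro x; rw [hp]; exact divg_affine a b x
  have hJp : ∫ z in Sref, divg p (x₁ + ML (x₂ - x₁) (x₃ - x₁) z) = a := by
    simp_rw [hdivp]
    rw [setIntegral_const, measureReal_def, Sref_vol, smul_eq_mul]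
    ring
  rw [hJp] at hpio_p
  -- equal fluxes give equal integrals
  rw [← h₁, ← h₂, ← h₃] at hpio_q
  have hJq : ∫ z in Sref, divg q (x₁ + ML (x₂ - x₁) (x₃ - x₁) z) = a := by
    have := hpio_q.trans hpio_p.symm
    exact mul_left_cancel₀ hDne this
  -- conclude
  have hIK : ∫ x in K, divg q x
      = |(x₂ - x₁) 0 * (x₃ - x₁) 1 - (x₂ - x₁) 1 * (x₃ - x₁) 0| * a := by
    rw [hKL, hcvq, hJq]
  rw [hIK, hvolK]
  set Eabs := |(x₂ - x₁) 0 * (x₃ - x₁) 1 - (x₂ - x₁) 1 * (x₃ - x₁) 0| with hE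
  field_simp

end
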